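/- Let Σ be a real symmetric positive definite k×k matrix, A a real k×r matrix with Aᵀ Σ⁻¹ A invertible, and M a real symmetric positive definite r×r matrix with M ⪰ Aᵀ Σ⁻¹ A. Then A M⁻¹ Aᵀ ⪯ A (Aᵀ Σ⁻¹ A)⁻¹ Aᵀ ⪯ Σ; that is, both A (Aᵀ Σ⁻¹ A)⁻¹ Aᵀ − A M⁻¹ Aᵀ and Σ − A (Aᵀ Σ⁻¹ A)⁻¹ Aᵀ are positive semidefinite. -/

import Mathlib

open Matrix

/-- Let `Σ` be a real symmetric positive definite `k×k` matrix, `A` a real `k×r` matrix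
with `Aᵀ Σ⁻¹ A` invertible, and `M` a real symmetric positive definite `r×r` matrix with
`M ⪰ Aᵀ Σ⁻¹ A`. Then `A M⁻¹ Aᵀ ⪯ A (Aᵀ Σ⁻¹ A)⁻¹ Aᵀ ⪯ Σ`: both
`A (Aᵀ Σ⁻¹ A)⁻¹ Aᵀ - A M⁻¹ Aᵀ` and `Σ - A (Aᵀ Σ⁻¹ A)⁻¹ Aᵀ` are positive semidefinite. -/
theorem sandwich_inv_gram_le {k r : ℕ}
    (S : Matrix (Fin k) (Fin k) ℝ) (hS : S.PosDef)
    (A : Matrix (Fin k) (Fin r) ℝ) (hA : IsUnit (Aᵀ * S⁻¹ * A))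
    (M : Matrix (Fin r) (Fin r) ℝ) (hM : M.PosDef)
    (hMA : (M - Aᵀ * S⁻¹ * A).PosSemidef) :
    (A * (Aᵀ * S⁻¹ * A)⁻¹ * Aᵀ - A * M⁻¹ * Aᵀ).PosSemidef ∧
      (S - A * (Aᵀ * S⁻¹ * A)⁻¹ * Aᵀ).PosSemidef := by
  have hAT : Aᵀ = Aᴴ := (conjTranspose_eq_transpose_of_trivial A).symm
  rw [hAT] at hA hMA ⊢
  set G := Aᴴ * S⁻¹ * A with hGdef
  have hSinv : (S⁻¹).PosDef := hS.inv
  have hGpsd : G.PosSemidef := hSinv.posSemidef.conjTranspose_mul_mul_same A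
  have hGpd : G.PosDef := by
    refine PosDef.of_dotProduct_mulVec_pos hGpsd.isHermitian fun x hx => ?_
    refine lt_of_le_of_ne (hGpsd.dotProduct_mulVec_nonneg x) fun h => hx ?_
    have h0 : G *ᵥ x = 0 := (hGpsd.dotProduct_mulVec_zero_iff x).mp h.symm
    exact (Matrix.mulVec_injective_iff_isUnit.mpr hA).eq_iff.mp (by simpa using h0)
  haveI : Invertible G := hA.invertible
  haveI : Invertible M := hM.isUnit.invertible
  have hGinv : (G⁻¹).PosDef := hGpd.inv
  haveI : Invertible G⁻¹ := hGinv.isUnit.invertible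
  haveI : Invertible S := hS.isUnit.invertible
  -- first inequality
  have key : (G⁻¹ - M⁻¹).PosSemidef := by
    have h2 := PosDef.fromBlocks₂₂ M (1 : Matrix (Fin r) (Fin r) ℝ) hGinv
    have h1 := PosDef.fromBlocks₁₁ (R' := ℝ) (A := M) (1 : Matrix (Fin r) (Fin r) ℝ) G⁻¹ hM
    simp only [conjTranspose_one, one_mul, mul_one, inv_inv_of_invertible] at h1 h2
    exact h1.mp (h2.mpr hMA)
  have r1 := key.mul_mul_conjTranspose_same A
  have e1 : A * (G⁻¹ - M⁻¹) * Aᴴ = A * G⁻¹ * Aᴴ - A * M⁻¹ * Aᴴ := by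
    rw [Matrix.mul_sub, Matrix.sub_mul]
  rw [e1] at r1
  refine ⟨r1, ?_⟩
  -- second inequality
  have hb : (fromBlocks S A Aᴴ G).PosSemidef := by
    refine (PosDef.fromBlocks₁₁ A G hS).mpr ?_
    simpa [hGdef] using (Matrix.PosSemidef.zero (n := Fin r) (R := ℝ))
  exact (PosDef.fromBlocks₂₂ S A hGpd).mp hb
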